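/- Principal blow-ups at seam points for smooth first-layer norms are piecewise-linear with two partial functions: let N be a norm on ℝⁿ × ℝⁿ, λ > 0, σ ∈ {1, −1}, and let p = (a, b, σ/λ²) with N(a,b) = 1 (a seam point of the unit sphere). If N is Fréchet differentiable at (a,b) with derivative D, then for every q = (x,y,z) ∈ H_{2n+1}(ℝ), lim_{t→0⁺} (‖p·δ_t q‖ − 1)/t = max( D(x,y), σ·(λ²/4)·(a⋅y − b⋅x) ). -/

import Mathlib

open Filter Metric Real

noncomputable section

/-- The higher Heisenberg group `H_{2n+1}(ℝ)` as `ℝⁿ × ℝⁿ × ℝ`. -/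
abbrev Heis (n : ℕ) := (Fin n → ℝ) × (Fin n → ℝ) × ℝ

/-- Standard inner product on `ℝⁿ`. -/
def dotR {n : ℕ} (x y : Fin n → ℝ) : ℝ := ∑ i, x i * y i

/-- Heisenberg group product. -/
def Hmul {n : ℕ} (p q : Heis n) : Heis n :=
  (p.1 + q.1, p.2.1 + q.2.1,
    p.2.2 + q.2.2 + (1 / 2) * (dotR p.1 q.2.1 - dotR q.1 p.2.1))

/-- Heisenberg dilations `δ_t(x,y,z) = (tx, ty, t²z)`. -/
def Hdil {n : ℕ} (t : ℝ) (p : Heis n) : Heis n :=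
  (t • p.1, t • p.2.1, t ^ 2 * p.2.2)

/-- The layered sup quasi-norm `max(N(x,y), λ√|z|)`. -/
def layeredNorm {n : ℕ} (N : (Fin n → ℝ) × (Fin n → ℝ) → ℝ) (lam : ℝ) (p : Heis n) : ℝ :=
  max (N (p.1, p.2.1)) (lam * Real.sqrt |p.2.2|)

/-- **Principal blow-ups at seam points for smooth first-layer norms.** At a seam point
`p = (a, b, σ/λ²)` with `N(a,b) = 1`, if `N` is Fréchet differentiable at `(a,b)` with
derivative `D`, then the principal blow-up is the piecewise-linear function
`max(D(x,y), σ·(λ²/4)·(a⋅y − b⋅x))`. -/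
theorem blowup_seam_smooth (n : ℕ) (N : (Fin n → ℝ) × (Fin n → ℝ) → ℝ)
    (hN_add : ∀ u v, N (u + v) ≤ N u + N v)
    (hN_smul : ∀ (c : ℝ) u, N (c • u) = |c| * N u)
    (hN_zero : ∀ u, N u = 0 ↔ u = 0)
    (lam : ℝ) (hlam : 0 < lam) (σ : ℝ) (hσ : σ = 1 ∨ σ = -1)
    (a b : Fin n → ℝ) (hab : N (a, b) = 1)
    (D : ((Fin n → ℝ) × (Fin n → ℝ)) →L[ℝ] ℝ) (hD : HasFDerivAt N D (a, b))
    (x y : Fin n → ℝ) (z : ℝ) :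
    Tendsto
      (fun t : ℝ =>
        (layeredNorm N lam (Hmul (a, b, σ / lam ^ 2) (Hdil t (x, y, z))) - 1) / t)
      (nhdsWithin 0 (Set.Ioi 0))
      (nhds (max (D (x, y)) (σ * (lam ^ 2 / 4) * (dotR a y - dotR b x)))) := by

  -- abbreviations
  set c : ℝ := (1/2) * (dotR a y - dotR b x) with hc
  have hσ2 : σ * σ = 1 := by rcases hσ with h | h <;> simp [h]
  set φ : ℝ → ℝ := fun t => N ((a, b) + t • ((x, y) : (Fin n → ℝ) × (Fin n → ℝ))) with hφdef
  set h : ℝ → ℝ := fun t => σ / lam ^ 2 + t ^ 2 * z + t * c with hhdef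
  set G : ℝ → ℝ := fun t => lam * Real.sqrt (σ * h t) with hGdef
  have hφ0 : φ 0 = 1 := by simp [hφdef, hab]
  have hh0 : h 0 = σ / lam ^ 2 := by simp [hhdef]
  have hσh0 : σ * h 0 = 1 / lam ^ 2 := by
    rw [hh0]; field_simp; nlinarith [hσ2]
  have hsq : Real.sqrt (1 / lam ^ 2) = 1 / lam := by
    rw [one_div, one_div, Real.sqrt_inv, Real.sqrt_sq hlam.le]
  have hG0 : G 0 = 1 := by
    rw [hGdef]; simp only [hσh0, hsq]; field_simp
  -- derivative of φ
  have hline : HasDerivAt (fun t : ℝ => (a, b) + t • ((x, y) : (Fin n → ℝ) × (Fin n → ℝ)))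
      ((x, y) : (Fin n → ℝ) × (Fin n → ℝ)) 0 := by
    simpa using ((hasDerivAt_id (0:ℝ)).smul_const ((x, y) : (Fin n → ℝ) × (Fin n → ℝ))).const_add
      ((a, b) : (Fin n → ℝ) × (Fin n → ℝ))
  have hD' : HasFDerivAt N D ((a, b) + (0:ℝ) • ((x, y) : (Fin n → ℝ) × (Fin n → ℝ))) := by
    simpa using hD
  have hφd : HasDerivAt φ (D (x, y)) 0 := hD'.comp_hasDerivAt 0 hline
  -- derivative of h
  have hh1 : HasDerivAt (fun t : ℝ => t ^ 2 * z) 0 0 := by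
    simpa using (hasDerivAt_pow 2 (0:ℝ)).mul_const z
  have hh2 : HasDerivAt (fun t : ℝ => t * c) c 0 := by
    simpa using (hasDerivAt_id (0:ℝ)).mul_const c
  have hhd : HasDerivAt h c 0 := by
    simpa [hhdef, add_assoc] using (hh1.add hh2).const_add (σ / lam ^ 2)
  have hσhd : HasDerivAt (fun t => σ * h t) (σ * c) 0 := hhd.const_mul σ
  have hσh0ne : σ * h 0 ≠ 0 := by
    rw [hσh0]; positivity
  have hGd : HasDerivAt G (σ * (lam ^ 2 / 4) * (dotR a y - dotR b x)) 0 := by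
    have := (hσhd.sqrt hσh0ne).const_mul lam
    refine this.congr_deriv ?_
    rw [hσh0, hsq, hc]
    field_simp
    ring
  -- slope limits on 𝓝[>] 0
  have hmono : nhdsWithin (0:ℝ) (Set.Ioi 0) ≤ nhdsWithin (0:ℝ) {(0:ℝ)}ᶜ := by
    apply nhdsWithin_mono
    intro t ht
    exact ne_of_gt ht
  have Tφ : Tendsto (fun t => (φ t - 1) / t) (nhdsWithin 0 (Set.Ioi 0)) (nhds (D (x, y))) := by
    have := (hasDerivAt_iff_tendsto_slope.mp hφd).mono_left hmono
    refine this.congr (fun t => ?_)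
    simp [slope_def_field, hφ0, div_eq_div_iff]
  have TG : Tendsto (fun t => (G t - 1) / t) (nhdsWithin 0 (Set.Ioi 0))
      (nhds (σ * (lam ^ 2 / 4) * (dotR a y - dotR b x))) := by
    have := (hasDerivAt_iff_tendsto_slope.mp hGd).mono_left hmono
    refine this.congr (fun t => ?_)
    simp [slope_def_field, hG0, div_eq_div_iff]
  have Tmax := Tφ.max TG
  -- eventual equality of functions
  have hcont : ContinuousAt (fun t => σ * h t) 0 := hσhd.continuousAt
  have hev : ∀ᶠ t in nhdsWithin (0:ℝ) (Set.Ioi 0), 0 < σ * h t := by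
    apply eventually_nhdsWithin_of_eventually_nhds
    have hmem : Set.Ioi (0:ℝ) ∈ nhds (σ * h 0) :=
      IsOpen.mem_nhds isOpen_Ioi (by rw [Set.mem_Ioi, hσh0]; positivity)
    filter_upwards [hcont.eventually_mem hmem] with s hs using hs
  refine Tmax.congr' ?_
  filter_upwards [hev, self_mem_nhdsWithin] with t hpos ht
  have ht0 : (0:ℝ) < t := ht
  have habs : |σ / lam ^ 2 + t ^ 2 * z +
      1 / 2 * (dotR a (t • y) - dotR (t • x) b)| = σ * h t := by
    have hdot1 : dotR a (t • y) = t * dotR a y := by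
      simp only [dotR, Pi.smul_apply, smul_eq_mul, Finset.mul_sum]
      exact Finset.sum_congr rfl fun i _ => by ring
    have hdot2 : dotR (t • x) b = t * dotR b x := by
      simp only [dotR, Pi.smul_apply, smul_eq_mul, Finset.mul_sum]
      exact Finset.sum_congr rfl fun i _ => by ring
    have heq : σ / lam ^ 2 + t ^ 2 * z + 1 / 2 * (dotR a (t • y) - dotR (t • x) b) = h t := by
      rw [hdot1, hdot2, hhdef, hc]; ring
    rw [heq]
    rcases hσ with hσ' | hσ'
    · rw [hσ'] at hpos ⊢; rw [abs_of_pos (by linarith [hpos]), one_mul]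
    · rw [hσ'] at hpos ⊢
      rw [abs_of_neg (by nlinarith [hpos])]
      ring
  show max ((φ t - 1) / t) ((G t - 1) / t)
      = (layeredNorm N lam (Hmul (a, b, σ / lam ^ 2) (Hdil t (x, y, z))) - 1) / t
  have hlay : layeredNorm N lam (Hmul (a, b, σ / lam ^ 2) (Hdil t (x, y, z)))
      = max (φ t) (G t) := by
    simp only [layeredNorm, Hmul, Hdil, hGdef, hφdef]
    rw [habs]
    congr 1
  rw [hlay, ← max_sub_sub_right, ← max_div_div_right ht0.le]
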